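/- Let ε > 0 and let (λ_k) be a sequence of finitely supported signed measures on a set K with total variation ‖λ_k‖ ≤ 1, and (V_k) pairwise disjoint subsets of K satisfying: |λ_k(V_k)| > ε for all k, |λ_k|(V_l) = 0 for k < l, and |λ_l|(V_k) ≤ ε/3^k for k < l. Define for each k a function value a_{n,k} = λ_n(φ_k) where λ_k(φ_k) = |λ_k(V_k)| > ε, a_{n,k} = 0 for n < k, and |a_{n,k}| ≤ ε/3^k for n > k. Then the linear operator Θ on c₀ defined recursively by x'_n = (x_n − Σ_{k<n} x'_k a_{n,k}) / a_{n,n} maps c₀ into c₀; i.e., if (x_n) → 0 then (x'_n) → 0. -/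

import Mathlib

open Filter Topology

/-- Given `ε > 0` and a lower-triangular matrix `(a n k)` with `a n n > ε`,
`a n k = 0` for `n < k`, `|a n k| ≤ ε/3^k` for `k < n`, and `a n k → 0` as `n → ∞`
for each fixed `k`, the operator defined by the recursion
`x'_n = (x_n - ∑_{k<n} x'_k a_{n,k}) / a_{n,n}` maps `c₀` into `c₀`:
if `x_n → 0` then `x'_n → 0`. -/
theorem stmt_13 (ε : ℝ) (hε : 0 < ε) (a : ℕ → ℕ → ℝ)
    (hdiag : ∀ n, ε < a n n)
    (hupper : ∀ n k, n < k → a n k = 0)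
    (hsmall : ∀ n k, k < n → |a n k| ≤ ε / 3 ^ k)
    (hcol : ∀ k, Tendsto (fun n => a n k) atTop (𝓝 0))
    (x x' : ℕ → ℝ)
    (hrec : ∀ n, x' n = (x n - ∑ k ∈ Finset.range n, x' k * a n k) / a n n)
    (hx : Tendsto x atTop (𝓝 0)) :
    Tendsto x' atTop (𝓝 0) := by
  have hε3 : ∀ n, (0:ℝ) < a n n := fun n => hε.trans (hdiag n)
  obtain ⟨C, hC⟩ : ∃ C, ∀ n, |x n| ≤ C := by
    have h1 : Tendsto (fun n => |x n|) atTop (𝓝 0) := by simpa using hx.abs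
    obtain ⟨C, hC⟩ := h1.bddAbove_range
    exact ⟨C, fun n => hC (Set.mem_range_self n)⟩
  have hC0 : (0:ℝ) ≤ C := le_trans (abs_nonneg _) (hC 0)
  -- basic bound on the recursion
  have hb : ∀ n, |x' n| ≤ (|x n| + ∑ k ∈ Finset.range n, |x' k| * |a n k|) / ε := by
    intro n
    rw [hrec n, abs_div, abs_of_pos (hε3 n)]
    apply div_le_div₀ (by positivity) ?_ hε (hdiag n).le
    calc |x n - ∑ k ∈ Finset.range n, x' k * a n k|
        ≤ |x n| + |∑ k ∈ Finset.range n, x' k * a n k| := abs_sub _ _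
      _ ≤ |x n| + ∑ k ∈ Finset.range n, |x' k * a n k| := by
          gcongr; exact Finset.abs_sum_le_sum_abs _ _
      _ = |x n| + ∑ k ∈ Finset.range n, |x' k| * |a n k| := by simp [abs_mul]
  have hterm : ∀ k : ℕ, (C/ε * (4 - 8/3*(1/3:ℝ)^k)) * (ε / 3^k)
      = C * (4*(1/3:ℝ)^k - 8/3*(1/9)^k) := by
    intro k
    have h9 : (1/9:ℝ)^k = (1/3:ℝ)^k * (1/3)^k := by rw [← mul_pow]; norm_num
    have h3 : (1/3:ℝ)^k = 1/(3:ℝ)^k := by rw [one_div_pow]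
    rw [h9, h3]
    field_simp
  have key : ∀ n, |x' n| ≤ C / ε * (4 - 8/3 * (1/3:ℝ)^n) := by
    intro n
    induction n using Nat.strong_induction_on with
    | _ n ih =>
      have hsum : ∑ k ∈ Finset.range n, |x' k| * |a n k|
          ≤ ∑ k ∈ Finset.range n, C * (4*(1/3:ℝ)^k - 8/3*(1/9)^k) := by
        apply Finset.sum_le_sum
        intro k hk
        have hk' := Finset.mem_range.mp hk
        have h1 := ih k hk'
        have h2 := hsmall n k hk'
        have ht1 : (1/3:ℝ)^k ≤ 1 := pow_le_one₀ (by norm_num) (by norm_num)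
        have hpos : (0:ℝ) ≤ C/ε * (4 - 8/3*(1/3:ℝ)^k) := by
          apply mul_nonneg (div_nonneg hC0 hε.le); nlinarith
        calc |x' k| * |a n k| ≤ (C/ε * (4 - 8/3*(1/3:ℝ)^k)) * (ε / 3^k) :=
              mul_le_mul h1 h2 (abs_nonneg _) hpos
          _ = C * (4*(1/3:ℝ)^k - 8/3*(1/9)^k) := hterm k
      have hfinal : C + ∑ k ∈ Finset.range n, C * (4*(1/3:ℝ)^k - 8/3*(1/9)^k)
          ≤ C * (4 - 8/3*(1/3)^n) := by
        have hg1 : ∑ k ∈ Finset.range n, (1/3:ℝ)^k = ((1/3:ℝ)^n - 1)/((1/3) - 1) :=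
          geom_sum_eq (by norm_num) n
        have hg2 : ∑ k ∈ Finset.range n, (1/9:ℝ)^k = ((1/9:ℝ)^n - 1)/((1/9) - 1) :=
          geom_sum_eq (by norm_num) n
        have hsplit : ∑ k ∈ Finset.range n, C * (4*(1/3:ℝ)^k - 8/3*(1/9)^k)
            = C*4*(∑ k ∈ Finset.range n, (1/3:ℝ)^k)
              - C*(8/3)*(∑ k ∈ Finset.range n, (1/9:ℝ)^k) := by
          rw [Finset.mul_sum, Finset.mul_sum, ← Finset.sum_sub_distrib]
          apply Finset.sum_congr rfl; intros; ring
        have h9 : (1/9:ℝ)^n = (1/3:ℝ)^n * (1/3)^n := by rw [← mul_pow]; norm_num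
        have ht1 : (1/3:ℝ)^n ≤ 1 := pow_le_one₀ (by norm_num) (by norm_num)
        have ht0 : (0:ℝ) ≤ (1/3:ℝ)^n := by positivity
        have hg1' : ∑ k ∈ Finset.range n, (1/3:ℝ)^k = 3/2 - 3/2*(1/3:ℝ)^n := by
          rw [hg1]; ring
        have hg2' : ∑ k ∈ Finset.range n, (1/9:ℝ)^k = 9/8 - 9/8*((1/3:ℝ)^n*(1/3:ℝ)^n) := by
          rw [hg2, h9]; ring
        have hkey : (0:ℝ) ≤ C * (1/3:ℝ)^n * (10/3 - 3*(1/3:ℝ)^n) := by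
          apply mul_nonneg (mul_nonneg hC0 ht0); nlinarith
        rw [hsplit, hg1', hg2']
        nlinarith
      calc |x' n| ≤ (|x n| + ∑ k ∈ Finset.range n, |x' k| * |a n k|) / ε := hb n
        _ ≤ (C * (4 - 8/3*(1/3:ℝ)^n)) / ε := by
            gcongr
            linarith [hsum, hC n]
        _ = C / ε * (4 - 8/3*(1/3:ℝ)^n) := by ring
  set M : ℝ := 4*C/ε with hMdef
  have hM0 : (0:ℝ) ≤ M := by positivity
  have hM : ∀ n, |x' n| ≤ M := by
    intro n
    refine (key n).trans ?_
    have ht0 : (0:ℝ) ≤ (1/3:ℝ)^n := by positivity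
    calc C/ε * (4 - 8/3*(1/3:ℝ)^n) ≤ C/ε * 4 :=
          mul_le_mul_of_nonneg_left (by linarith) (div_nonneg hC0 hε.le)
      _ = M := by rw [hMdef]; ring
  rw [Metric.tendsto_atTop]
  intro δ hδ
  have hgeo : Tendsto (fun N : ℕ => M * ε * (3/2) * (1/3:ℝ)^N) atTop (𝓝 0) := by
    simpa using (tendsto_pow_atTop_nhds_zero_of_lt_one (by norm_num : (0:ℝ) ≤ 1/3)
      (by norm_num : (1/3:ℝ) < 1)).const_mul (M*ε*(3/2))
  obtain ⟨N₁, hN₁⟩ := (hgeo.eventually_lt_const (by positivity : (0:ℝ) < ε*δ/3)).exists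
  have hsumcol : Tendsto (fun n => ∑ k ∈ Finset.range N₁, |x' k| * |a n k|) atTop (𝓝 0) := by
    have h := tendsto_finset_sum (Finset.range N₁)
      (fun k _ => ((hcol k).abs.const_mul |x' k| :
        Tendsto (fun n => |x' k| * |a n k|) atTop (𝓝 (|x' k| * |(0:ℝ)|))))
    simpa using h
  have E1 : ∀ᶠ n in atTop, |x n| < ε*δ/3 :=
    (show Tendsto (fun n => |x n|) atTop (𝓝 0) by simpa using hx.abs).eventually_lt_const
      (by positivity)
  have E2 : ∀ᶠ n in atTop, ∑ k ∈ Finset.range N₁, |x' k| * |a n k| < ε*δ/3 :=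
    hsumcol.eventually_lt_const (by positivity)
  refine eventually_atTop.mp ?_
  filter_upwards [E1, E2, eventually_ge_atTop N₁] with n h1 h2 hn
  rw [Real.dist_eq, sub_zero]
  have hsplit : ∑ k ∈ Finset.range n, |x' k| * |a n k|
      = ∑ k ∈ Finset.range N₁, |x' k| * |a n k| + ∑ k ∈ Finset.Ico N₁ n, |x' k| * |a n k| := by
    rw [Finset.range_eq_Ico, Finset.range_eq_Ico]
    exact (Finset.sum_Ico_consecutive _ (Nat.zero_le N₁) hn).symm
  have hgs : ∑ k ∈ Finset.Ico N₁ n, (1/3:ℝ)^k ≤ (3/2)*(1/3:ℝ)^N₁ := by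
    rw [geom_sum_Ico (by norm_num : (1/3:ℝ) ≠ 1) hn]
    have h0 := pow_nonneg (by norm_num : (0:ℝ) ≤ 1/3) n
    have h0' := pow_nonneg (by norm_num : (0:ℝ) ≤ 1/3) N₁
    rw [div_le_iff_of_neg (by norm_num : (1/3:ℝ) - 1 < 0)]
    nlinarith
  have htail : ∑ k ∈ Finset.Ico N₁ n, |x' k| * |a n k| ≤ M * ε * (3/2) * (1/3:ℝ)^N₁ := by
    calc ∑ k ∈ Finset.Ico N₁ n, |x' k| * |a n k|
        ≤ ∑ k ∈ Finset.Ico N₁ n, M * (ε * (1/3:ℝ)^k) := by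
          apply Finset.sum_le_sum
          intro k hk
          obtain ⟨_, hk2⟩ := Finset.mem_Ico.mp hk
          have h2 := hsmall n k hk2
          have : ε / 3^k = ε * (1/3:ℝ)^k := by rw [one_div_pow]; ring
          exact mul_le_mul (hM k) (this ▸ h2) (abs_nonneg _) hM0
      _ = M * ε * ∑ k ∈ Finset.Ico N₁ n, (1/3:ℝ)^k := by
          rw [Finset.mul_sum]; exact Finset.sum_congr rfl (by intros; ring)
      _ ≤ M * ε * ((3/2)*(1/3:ℝ)^N₁) := by
          apply mul_le_mul_of_nonneg_left hgs (by positivity)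
      _ = M * ε * (3/2) * (1/3:ℝ)^N₁ := by ring
  calc |x' n| ≤ (|x n| + ∑ k ∈ Finset.range n, |x' k| * |a n k|) / ε := hb n
    _ < δ := by
      rw [div_lt_iff₀ hε, hsplit]
      nlinarith [hN₁, h1, h2, htail]
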